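/- For every α > 0 and λ > 0 there exists a positive integer m₀ with the following property. Set T₀ = exp(m₀^{α/2}) and γ_k = exp(−exp(k^{α/4})) for k ∈ ℕ. Let N be a random variable whose distribution is Poisson with parameter λ, and define the random variable R by R = (log N)^{2/α} if N ≥ T₀ and R = 0 otherwise. Then for every real t > 0 one has ∏_{k = max(⌈t⌉, m₀)}^{∞} (1 − γ_k) ≤ P(R < t). -/

import Mathlib

open MeasureTheory Filter

set_option maxHeartbeats 1000000

/-- Lemma 2.4 (rober): for every `α, lam > 0` there is `m₀ ∈ ℕ`, `m₀ > 0`, such that,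
with `T₀ = exp(m₀^{α/2})` and `γ_k = exp(−exp(k^{α/4}))`, for every Poisson(`lam`)
random variable `N` and the derived variable `R = (log N)^{2/α} · 1_{N ≥ T₀}`,
one has `∏_{k = max(⌈t⌉, m₀)}^{∞} (1 − γ_k) ≤ P(R < t)` for all `t > 0`. -/
theorem rober (α lam : ℝ) (hα : 0 < α) (hlam : 0 < lam) :
    ∃ m₀ : ℕ, 0 < m₀ ∧
      ∀ (Ω : Type) (_ : MeasurableSpace Ω) (P : Measure Ω) (_ : IsProbabilityMeasure P)
        (N : Ω → ℕ),
        (∀ k : ℕ,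
          P {ω | N ω = k} = ENNReal.ofReal (Real.exp (-lam) * lam ^ k / (Nat.factorial k))) →
        ∀ t : ℝ, 0 < t →
          (∏' j : ℕ,
              (1 - Real.exp (-Real.exp (((max (Nat.ceil t) m₀ + j : ℕ) : ℝ) ^ (α / 4)))))
            ≤ (P {ω |
                (if Real.exp ((m₀ : ℝ) ^ (α / 2)) ≤ (N ω : ℝ)
                  then Real.log (N ω) ^ (2 / α) else 0) < t}).toReal := by
  classical
  set s : ℕ := ⌈2*lam⌉₊ with hs_def
  have hslam : 2 * lam ≤ (s:ℝ) + 1 := le_trans (Nat.le_ceil _) (by rw [← hs_def]; norm_num)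
  set C : ℝ := 2 * lam^s * 2^s with hC_def
  have hCpos : 0 < C := by positivity
  set K : ℝ := Real.log (2*(1+|Real.log C|)) + 1 with hK_def
  have hKpos : 0 < K := by
    have h1 : (1:ℝ) ≤ 2*(1+|Real.log C|) := by nlinarith [abs_nonneg (Real.log C)]
    have h2 := Real.log_nonneg h1
    rw [hK_def]; linarith
  have hexpK : Real.exp K = 2*(1+|Real.log C|) * Real.exp 1 := by
    rw [hK_def, Real.exp_add, Real.exp_log (by positivity)]
  set D : ℝ := max (max 1 (2^(α/4) + K)) (Real.log ((s:ℝ)+1)) with hD_def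
  have htend : Tendsto (fun n : ℕ => ((n:ℝ)-1)^(α/4)) atTop atTop := by
    have h1 : Tendsto (fun n : ℕ => ((n:ℝ)-1)) atTop atTop := by
      simpa [sub_eq_add_neg] using
        tendsto_atTop_add_const_right atTop (-1 : ℝ) tendsto_natCast_atTop_atTop
    exact
      (tendsto_rpow_atTop (by positivity : (0:ℝ) < α/4)).comp h1
  obtain ⟨m₁, hm₁⟩ := eventually_atTop.1 (htend.eventually_ge_atTop D)
  refine ⟨max m₁ 2, by omega, ?_⟩
  intro Ω _inst P _instP N hN t ht
  set m₀ : ℕ := max m₁ 2 with hm₀_def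
  set M : ℕ := max (Nat.ceil t) m₀ with hM_def
  set E : ℝ := Real.exp ((M:ℝ)^(α/4)) with hE_def
  set a : ℕ → ℝ := fun j => 1 - Real.exp (-Real.exp (((M + j : ℕ):ℝ)^(α/4))) with ha_def
  set S : Set Ω := {ω | (if Real.exp ((m₀ : ℝ) ^ (α / 2)) ≤ (N ω : ℝ)
      then Real.log (N ω) ^ (2 / α) else 0) < t} with hS_def
  -- basic facts about M
  have hMm₀ : m₀ ≤ M := le_max_right _ _
  have hM2 : 2 ≤ M := le_trans (le_max_right _ _) hMm₀
  have hM1R : (1:ℝ) ≤ (M:ℝ) - 1 := by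
    have : (2:ℝ) ≤ (M:ℝ) := by exact_mod_cast hM2
    linarith
  have hMpos : (0:ℝ) < (M:ℝ) - 1 := by linarith
  set y : ℝ := ((M:ℝ)-1)^(α/4) with hy_def
  have hyD : D ≤ y := hm₁ M (le_trans (le_max_left _ _) hMm₀)
  have hy1 : 1 ≤ y := le_trans (le_trans (le_max_left _ _) (le_max_left _ _)) hyD
  have hycK : 2^(α/4) + K ≤ y := le_trans (le_trans (le_max_right _ _) (le_max_left _ _)) hyD
  have hylog : Real.log ((s:ℝ)+1) ≤ y := le_trans (le_max_right _ _) hyD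
  have hyy : ((M:ℝ)-1)^(α/2) = y * y := by
    rw [hy_def, ← Real.rpow_add hMpos]
    norm_num
    ring_nf
  set B : ℝ := Real.exp (((M:ℝ)-1)^(α/2)) with hB_def
  set b : ℕ := ⌈B⌉₊ with hb_def
  have hBpos : 0 < B := Real.exp_pos _
  have hBb : B ≤ (b:ℝ) := Nat.le_ceil B
  have hsB : (s:ℝ) + 1 ≤ B := by
    rw [hB_def, hyy]
    calc (s:ℝ)+1 = Real.exp (Real.log ((s:ℝ)+1)) := (Real.exp_log (by positivity)).symm
    _ ≤ Real.exp y := Real.exp_le_exp.mpr hylog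
    _ ≤ Real.exp (y*y) := Real.exp_le_exp.mpr (by nlinarith)
  have hsb : s ≤ b := by
    have : (s:ℝ) ≤ (b:ℝ) := by linarith
    exact_mod_cast this
  have hE1 : 1 ≤ E := Real.one_le_exp (by positivity)
  have hMy : (M:ℝ)^(α/4) ≤ 2^(α/4) * y := by
    rw [hy_def, ← Real.mul_rpow (by norm_num) (by linarith)]
    apply Real.rpow_le_rpow (by positivity) (by linarith) (by positivity)
  have hBE : E * Real.exp K ≤ B := by
    rw [hB_def, hE_def, hyy, ← Real.exp_add]
    apply Real.exp_le_exp.mpr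
    nlinarith [hycK, hy1, hKpos, hMy]
  have hlog2 : (0.6931471803:ℝ) < Real.log 2 := Real.log_two_gt_d9
  have hblog : E + Real.log C ≤ B * Real.log 2 := by
    have he1 : (2:ℝ) ≤ Real.exp 1 := by nlinarith [Real.add_one_le_exp (1:ℝ)]
    have habs : Real.log C ≤ |Real.log C| := le_abs_self _
    have habs0 : 0 ≤ |Real.log C| := abs_nonneg _
    have h1 : E * (Real.exp K * Real.log 2) ≤ B * Real.log 2 := by
      rw [← mul_assoc]
      exact mul_le_mul_of_nonneg_right hBE (by linarith)
    have h2 : (1:ℝ) + |Real.log C| ≤ Real.exp K * Real.log 2 := by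
      rw [hexpK]
      have hp : (0:ℝ) ≤ 2*(1+|Real.log C|) := by positivity
      have hel : 2 * Real.log 2 ≤ Real.exp 1 * Real.log 2 :=
        mul_le_mul_of_nonneg_right he1 (by linarith)
      calc (1:ℝ) + |Real.log C| ≤ 2*(1+|Real.log C|) * (2 * 0.6931471803) := by nlinarith [habs0]
      _ ≤ 2*(1+|Real.log C|) * (Real.exp 1 * Real.log 2) := by
            apply mul_le_mul_of_nonneg_left _ hp
            nlinarith [hel, hlog2]
      _ = 2*(1+|Real.log C|) * Real.exp 1 * Real.log 2 := by ring
    have h3 : E + Real.log C ≤ E * (1 + |Real.log C|) := by nlinarith [hE1, habs, habs0]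
    have h4 : E * (1 + |Real.log C|) ≤ E * (Real.exp K * Real.log 2) :=
      mul_le_mul_of_nonneg_left h2 (by linarith)
    linarith
  -- the tail bound for individual Poisson terms
  have hcore : ∀ d : ℕ, lam^(s+d) / (Nat.factorial (s+d) : ℝ) ≤ lam^s * (1/2)^d := by
    intro d
    have hfac : (((s:ℝ)+1))^d ≤ ((Nat.factorial (s+d)):ℝ) := by
      have h := Nat.factorial_mul_pow_le_factorial (m := s) (n := d)
      have h2 : (s+1)^d ≤ Nat.factorial (s+d) :=
        le_trans (Nat.le_mul_of_pos_left _ (Nat.factorial_pos s)) h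
      calc ((s:ℝ)+1)^d = (((s+1:ℕ)):ℝ)^d := by push_cast; ring
      _ ≤ ((Nat.factorial (s+d)):ℝ) := by exact_mod_cast h2
    have hhalf : lam / ((s:ℝ)+1) ≤ 1/2 := by
      rw [div_le_div_iff₀ (by positivity) (by norm_num)]
      linarith
    calc lam^(s+d) / (Nat.factorial (s+d):ℝ) ≤ lam^(s+d) / (((s:ℝ)+1))^d := by
          gcongr
    _ = lam^s * (lam / ((s:ℝ)+1))^d := by
          rw [pow_add, div_pow, mul_div_assoc]
    _ ≤ lam^s * (1/2)^d := by
          gcongr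

  have hterm : ∀ k : ℕ, Real.exp (-lam) * lam^(b+k) / (Nat.factorial (b+k):ℝ)
      ≤ (lam^s * (1/2)^(b-s)) * (1/2)^k := by
    intro k
    have hbk : b + k = s + ((b - s) + k) := by omega
    have h1 := hcore ((b-s)+k)
    rw [← hbk] at h1
    have h2 : Real.exp (-lam) ≤ 1 := Real.exp_le_one_iff.mpr (by linarith)
    calc Real.exp (-lam) * lam^(b+k) / (Nat.factorial (b+k):ℝ)
        ≤ 1 * lam^(b+k) / (Nat.factorial (b+k):ℝ) := by
          gcongr
    _ = lam^(b+k) / (Nat.factorial (b+k):ℝ) := by ring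
    _ ≤ lam^s * (1/2)^((b-s)+k) := h1
    _ = (lam^s * (1/2)^(b-s)) * (1/2)^k := by rw [pow_add]; ring
  -- complement of S is contained in the tail event
  have hBN : ∀ ω, ω ∈ Sᶜ → B ≤ (N ω : ℝ) := by
    intro ω hω
    simp only [hS_def, Set.mem_compl_iff, Set.mem_setOf_eq, not_lt] at hω
    by_cases hc : Real.exp ((m₀:ℝ)^(α/2)) ≤ (N ω:ℝ)
    · rw [if_pos hc] at hω
      have hNpos : (0:ℝ) < (N ω:ℝ) := lt_of_lt_of_le (Real.exp_pos _) hc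
      have hlogN : ((m₀:ℝ))^(α/2) ≤ Real.log (N ω) := (Real.le_log_iff_exp_le hNpos).mpr hc
      have hlogN0 : 0 ≤ Real.log (N ω) :=
        le_trans (Real.rpow_nonneg (Nat.cast_nonneg _) _) hlogN
      have ht2 : t^(α/2) ≤ Real.log (N ω) := by
        have hcomp : (Real.log (N ω) ^ (2/α)) ^ (α/2) = Real.log (N ω) := by
          rw [← Real.rpow_mul hlogN0]
          rw [show (2/α)*(α/2) = 1 by field_simp, Real.rpow_one]
        calc t^(α/2) ≤ (Real.log (N ω) ^ (2/α))^(α/2) :=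
              Real.rpow_le_rpow ht.le hω (by positivity)
        _ = Real.log (N ω) := hcomp
      have hNt : Real.exp (t^(α/2)) ≤ (N ω:ℝ) := by
        rw [← Real.exp_log hNpos]
        exact Real.exp_le_exp.mpr ht2
      rcases le_total (Nat.ceil t) m₀ with hcm | hcm
      · have hMeq : M = m₀ := max_eq_right hcm
        refine le_trans ?_ hc
        apply Real.exp_le_exp.mpr
        apply Real.rpow_le_rpow (by linarith) ?_ (by positivity)
        rw [hMeq]; linarith
      · have hMeq : M = Nat.ceil t := max_eq_left hcm
        refine le_trans ?_ hNt
        apply Real.exp_le_exp.mpr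
        apply Real.rpow_le_rpow (by linarith) ?_ (by positivity)
        have hceil := Nat.ceil_lt_add_one ht.le
        rw [hMeq]
        push_cast
        linarith
    · rw [if_neg hc] at hω; linarith
  have hsub : Sᶜ ⊆ ⋃ k : ℕ, {ω | N ω = b + k} := by
    intro ω hω
    have hB := hBN ω hω
    have hbN : b ≤ N ω := Nat.ceil_le.mpr hB
    exact Set.mem_iUnion.mpr ⟨N ω - b, by simp only [Set.mem_setOf_eq]; omega⟩
  -- sum the tail
  set c : ℝ := lam^s * (1/2)^(b-s) with hc_def
  have hcpos : 0 < c := by positivity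
  have hsum : P Sᶜ ≤ ENNReal.ofReal (c * 2) := by
    calc P Sᶜ ≤ P (⋃ k : ℕ, {ω | N ω = b + k}) := measure_mono hsub
    _ ≤ ∑' k : ℕ, P {ω | N ω = b + k} := measure_iUnion_le _
    _ = ∑' k : ℕ, ENNReal.ofReal (Real.exp (-lam) * lam^(b+k) / (Nat.factorial (b+k):ℝ)) := by
          simp_rw [hN]
    _ ≤ ∑' k : ℕ, ENNReal.ofReal (c * (1/2)^k) :=
          ENNReal.tsum_le_tsum (fun k => ENNReal.ofReal_le_ofReal (hterm k))
    _ = ENNReal.ofReal (∑' k : ℕ, c * (1/2)^k) :=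
          (ENNReal.ofReal_tsum_of_nonneg (fun k => by positivity)
            ((summable_geometric_of_lt_one (by norm_num) (by norm_num)).mul_left c)).symm
    _ = ENNReal.ofReal (c * 2) := by
          rw [tsum_mul_left, tsum_geometric_of_lt_one (by norm_num) (by norm_num)]
          norm_num
  have hfinal : c * 2 ≤ Real.exp (-E) := by
    have h2 : ((1/2:ℝ))^(b-s) * (1/2)^s = (1/2)^b := by
      rw [← pow_add]
      congr 1
      omega
    have h3 : ((1/2:ℝ))^s * 2^s = 1 := by
      rw [← mul_pow]; norm_num
    have h4 : (1/2:ℝ)^(b-s) = (1/2)^b * 2^s := by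
      calc (1/2:ℝ)^(b-s) = (1/2)^(b-s) * ((1/2)^s * 2^s) := by rw [h3, mul_one]
      _ = ((1/2)^(b-s) * (1/2)^s) * 2^s := by ring
      _ = (1/2)^b * 2^s := by rw [h2]
    have h1 : c * 2 = C * (1/2)^b := by
      rw [hc_def, hC_def, h4]; ring
    rw [h1]
    have hpow : (1/2:ℝ)^b = Real.exp (-((b:ℝ) * Real.log 2)) := by
      rw [Real.exp_neg, Real.exp_nat_mul, Real.exp_log (by norm_num : (0:ℝ) < 2),
        one_div, inv_pow]
    have h5 : (1/2:ℝ)^b ≤ Real.exp (-(B * Real.log 2)) := by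
      rw [hpow]
      apply Real.exp_le_exp.mpr
      nlinarith [hBb, hlog2]
    calc C * (1/2)^b ≤ C * Real.exp (-(B*Real.log 2)) :=
          mul_le_mul_of_nonneg_left h5 hCpos.le
    _ = Real.exp (Real.log C - B*Real.log 2) := by
          rw [sub_eq_add_neg, Real.exp_add, Real.exp_log hCpos]
    _ ≤ Real.exp (-E) := Real.exp_le_exp.mpr (by linarith)
  have hcompl : P Sᶜ ≤ ENNReal.ofReal (Real.exp (-E)) :=
    le_trans hsum (ENNReal.ofReal_le_ofReal hfinal)
  have hPSc : (P Sᶜ).toReal ≤ Real.exp (-E) :=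
    ENNReal.toReal_le_of_le_ofReal (Real.exp_nonneg _) hcompl
  have hPS : 1 - (P Sᶜ).toReal ≤ (P S).toReal := by
    have h1 : (1:ENNReal) ≤ P S + P Sᶜ := by
      rw [← measure_univ (μ := P), ← Set.union_compl_self S]
      exact measure_union_le S Sᶜ
    have h2 := ENNReal.toReal_mono
      (ENNReal.add_ne_top.mpr ⟨measure_ne_top P _, measure_ne_top P _⟩) h1
    rw [ENNReal.toReal_add (measure_ne_top _ _) (measure_ne_top _ _), ENNReal.toReal_one] at h2
    linarith
  -- the product part
  have ha0 : ∀ j, 0 ≤ a j := by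
    intro j
    have : Real.exp (-Real.exp (((M + j : ℕ):ℝ)^(α/4))) ≤ 1 :=
      Real.exp_le_one_iff.mpr (neg_nonpos.mpr (Real.exp_nonneg _))
    simp only [ha_def]
    linarith
  have ha1 : ∀ j, a j ≤ 1 := by
    intro j
    have : 0 ≤ Real.exp (-Real.exp (((M + j : ℕ):ℝ)^(α/4))) := Real.exp_nonneg _
    simp only [ha_def]
    linarith
  have hanti : Antitone (fun u : Finset ℕ => ∏ j ∈ u, a j) := by
    intro u v huv
    have h1 : ∏ j ∈ v \ u, a j ≤ 1 :=
      Finset.prod_le_one (fun i _ => ha0 i) (fun i _ => ha1 i)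
    have h2 : 0 ≤ ∏ j ∈ u, a j := Finset.prod_nonneg (fun i _ => ha0 i)
    calc ∏ j ∈ v, a j = (∏ j ∈ v \ u, a j) * ∏ j ∈ u, a j := (Finset.prod_sdiff huv).symm
    _ ≤ 1 * ∏ j ∈ u, a j := mul_le_mul_of_nonneg_right h1 h2
    _ = ∏ j ∈ u, a j := one_mul _
  have hbdd : BddBelow (Set.range (fun u : Finset ℕ => ∏ j ∈ u, a j)) := by
    refine ⟨0, ?_⟩
    rintro x ⟨u, rfl⟩
    exact Finset.prod_nonneg (fun i _ => ha0 i)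
  have hprod : HasProd a (⨅ u : Finset ℕ, ∏ j ∈ u, a j) := tendsto_atTop_ciInf hanti hbdd
  have h1prod : (∏' j : ℕ, a j) ≤ a 0 := by
    rw [hprod.tprod_eq]
    calc ⨅ u : Finset ℕ, ∏ j ∈ u, a j ≤ ∏ j ∈ ({0} : Finset ℕ), a j := ciInf_le hbdd _
    _ = a 0 := Finset.prod_singleton _ _
  have ha0eq : a 0 = 1 - Real.exp (-E) := by
    simp only [ha_def, hE_def, Nat.add_zero]
  calc (∏' j : ℕ, a j) ≤ a 0 := h1prod
  _ = 1 - Real.exp (-E) := ha0eq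
  _ ≤ 1 - (P Sᶜ).toReal := by linarith
  _ ≤ (P S).toReal := hPS
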